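/- The log-sum-exp function lse(h) := ln(Σ_{y=1}^L e^{h_y}) on ℝ^L is 1-smooth with respect to the ℓ∞ norm: for all h₀, h ∈ ℝ^L, lse(h) ≤ lse(h₀) + ⟨softmax(h₀), h − h₀⟩ + (1/2)·(max_{y∈[L]} |h_y − (h₀)_y|)². -/

import Mathlib

noncomputable section

/-- Standard inner product on `ℝ^L`. -/
def dot {L : ℕ} (g h : Fin L → ℝ) : ℝ := ∑ y, g y * h y

/-- Log-sum-exp function `lse(h) = ln (∑_y e^{h_y})`. -/
def lse {L : ℕ} (h : Fin L → ℝ) : ℝ := Real.log (∑ y, Real.exp (h y))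

/-- Softmax function `softmax(h)_y = e^{h_y} / ∑_z e^{h_z}`. -/
def softmax {L : ℕ} (h : Fin L → ℝ) : Fin L → ℝ :=
  fun y => Real.exp (h y) / ∑ z, Real.exp (h z)

private lemma lse_key {L : ℕ} (hne : (Finset.univ : Finset (Fin L)).Nonempty)
    (w d : Fin L → ℝ) (hw : ∀ y, 0 < w y) (M : ℝ) (hdM : ∀ y, |d y| ≤ M) :
    Real.log (∑ y, w y * Real.exp (d y)) ≤
      Real.log (∑ y, w y) + (∑ y, w y * d y) / (∑ y, w y) + M ^ 2 / 2 := by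
  have hd2 : ∀ y, d y ^ 2 ≤ M ^ 2 := by
    intro y
    rw [← sq_abs]
    exact pow_le_pow_left₀ (abs_nonneg _) (hdM y) 2
  set S : ℝ → ℝ := fun t => ∑ y, w y * Real.exp (t * d y) with hS
  set S1 : ℝ → ℝ := fun t => ∑ y, w y * d y * Real.exp (t * d y) with hS1
  set S2 : ℝ → ℝ := fun t => ∑ y, w y * d y ^ 2 * Real.exp (t * d y) with hS2
  have hSpos : ∀ t, 0 < S t :=
    fun t => Finset.sum_pos (fun y _ => mul_pos (hw y) (Real.exp_pos _)) hne
  have hSne : ∀ t, S t ≠ 0 := fun t => (hSpos t).ne'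
  have hDS : ∀ t, HasDerivAt S (S1 t) t := by
    intro t
    apply HasDerivAt.fun_sum
    intro y _
    have h1 : HasDerivAt (fun t : ℝ => t * d y) (d y) t := hasDerivAt_mul_const (d y)
    have h2 := (h1.exp).const_mul (w y)
    refine h2.congr_deriv ?_; ring
  have hDS1 : ∀ t, HasDerivAt S1 (S2 t) t := by
    intro t
    apply HasDerivAt.fun_sum
    intro y _
    have h1 : HasDerivAt (fun t : ℝ => t * d y) (d y) t := hasDerivAt_mul_const (d y)
    have h2 := (h1.exp).const_mul (w y * d y)
    refine h2.congr_deriv ?_; ring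
  set f : ℝ → ℝ := fun t => Real.log (S t) with hf
  set f' : ℝ → ℝ := fun t => S1 t / S t with hf'
  have hDf : ∀ t, HasDerivAt f (f' t) t := fun t => (hDS t).log (hSne t)
  have hDf' : ∀ t, HasDerivAt f' ((S2 t * S t - S1 t * S1 t) / S t ^ 2) t :=
    fun t => (hDS1 t).div (hDS t) (hSne t)
  have hf''le : ∀ t, (S2 t * S t - S1 t * S1 t) / S t ^ 2 ≤ M ^ 2 := by
    intro t
    have hS2le : S2 t ≤ M ^ 2 * S t := by
      rw [Finset.mul_sum]
      apply Finset.sum_le_sum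
      intro y _
      have h1 : w y * d y ^ 2 ≤ w y * M ^ 2 :=
        mul_le_mul_of_nonneg_left (hd2 y) (hw y).le
      nlinarith [Real.exp_pos (t * d y)]
    rw [div_le_iff₀ (pow_pos (hSpos t) 2)]
    nlinarith [hSpos t, mul_self_nonneg (S1 t)]
  set G : ℝ → ℝ := fun t => f' 0 + M ^ 2 * t - f' t with hG
  have hDG : ∀ t, HasDerivAt G (M ^ 2 - (S2 t * S t - S1 t * S1 t) / S t ^ 2) t := by
    intro t
    have h1 : HasDerivAt (fun t : ℝ => f' 0 + M ^ 2 * t) (M ^ 2) t := by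
      have := ((hasDerivAt_id t).const_mul (M ^ 2)).const_add (f' 0)
      simpa using this
    exact h1.sub (hDf' t)
  have hGmono : Monotone G := by
    apply monotone_of_deriv_nonneg
    · exact fun t => ((hDG t).differentiableAt)
    · intro t
      rw [(hDG t).deriv]
      linarith [hf''le t]
  have hG0 : G 0 = 0 := by simp [hG]
  have hGnn : ∀ t, 0 ≤ t → 0 ≤ G t := fun t ht => hG0 ▸ hGmono ht
  set F : ℝ → ℝ := fun t => f 0 + f' 0 * t + M ^ 2 * t ^ 2 / 2 - f t with hF
  have hDF : ∀ t, HasDerivAt F (G t) t := by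
    intro t
    have ha : HasDerivAt (fun t : ℝ => f 0 + f' 0 * t) (f' 0) t := by
      have := ((hasDerivAt_id t).const_mul (f' 0)).const_add (f 0)
      simpa using this
    have hb : HasDerivAt (fun t : ℝ => M ^ 2 * t ^ 2 / 2) (M ^ 2 * t) t := by
      have := ((hasDerivAt_pow 2 t).const_mul (M ^ 2)).div_const 2
      refine this.congr_deriv ?_; push_cast; ring
    have := (ha.add hb).sub (hDf t)
    exact this
  have hFmono : MonotoneOn F (Set.Ici 0) := by
    apply monotoneOn_of_deriv_nonneg (convex_Ici 0)
    · have hFd : Differentiable ℝ F := fun t => (hDF t).differentiableAt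
      exact hFd.continuous.continuousOn
    · intro t _
      exact (hDF t).differentiableAt.differentiableWithinAt
    · intro t ht
      rw [(hDF t).deriv]
      exact hGnn t (le_of_lt (by simpa using ht))
  have key : F 0 ≤ F 1 := hFmono (by norm_num) (by norm_num) (by norm_num)
  have hF0 : F 0 = 0 := by simp [hF]
  have hkey : f 1 ≤ f 0 + f' 0 + M ^ 2 / 2 := by
    rw [hF0] at key
    simp only [hF] at key
    nlinarith [key]
  have e1 : f 1 = Real.log (∑ y, w y * Real.exp (d y)) := by
    simp only [hf, hS, one_mul]
  have e0 : f 0 = Real.log (∑ y, w y) := by simp [hf, hS]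
  have e0' : f' 0 = (∑ y, w y * d y) / (∑ y, w y) := by simp [hf', hS1, hS]
  rw [e1, e0, e0'] at hkey
  linarith

/-- The log-sum-exp function is `1`-smooth with respect to the `ℓ∞` norm:
`lse(h) ≤ lse(h₀) + ⟨softmax(h₀), h - h₀⟩ + (1/2) (max_y |h_y - (h₀)_y|)²`. -/
theorem lse_one_smooth {L : ℕ} (hL : 0 < L) (h₀ h : Fin L → ℝ) :
    lse h ≤ lse h₀ + dot (softmax h₀) (h - h₀) +
      (1 / 2) * (Finset.univ.sup' ⟨⟨0, hL⟩, Finset.mem_univ _⟩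
        (fun y => |h y - h₀ y|)) ^ 2 := by
  have hne : (Finset.univ : Finset (Fin L)).Nonempty := ⟨⟨0, hL⟩, Finset.mem_univ _⟩
  have key := lse_key hne (fun y => Real.exp (h₀ y)) (fun y => h y - h₀ y)
    (fun y => Real.exp_pos _)
    (Finset.univ.sup' ⟨⟨0, hL⟩, Finset.mem_univ _⟩ (fun y => |h y - h₀ y|))
    (fun y => by simpa using Finset.le_sup' (fun y => |h y - h₀ y|) (Finset.mem_univ y))
  have e1 : (∑ y, Real.exp (h₀ y) * Real.exp (h y - h₀ y)) = ∑ y, Real.exp (h y) := by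
    apply Finset.sum_congr rfl
    intro y _
    rw [← Real.exp_add]
    ring_nf
  have e2 : (∑ y, Real.exp (h₀ y) * (h y - h₀ y)) / (∑ y, Real.exp (h₀ y)) =
      dot (softmax h₀) (h - h₀) := by
    rw [dot, Finset.sum_div]
    apply Finset.sum_congr rfl
    intro y _
    simp only [softmax, Pi.sub_apply]
    rw [div_mul_eq_mul_div]
  rw [e1, e2] at key
  simp only [lse]
  linarith
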